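/- Let R = ℚ[x_1, x_2, …] be the polynomial ring over ℚ in countably many variables indexed by the positive integers, graded by a weight function w assigning to each variable x_k a degree w(k) ∈ ℕ. Let B be a commutative ℚ-algebra, and let q : ℕ₊ × ℕ₊ → ℚ be a family of positive rationals with q(n,1) = 1 for all n ≥ 1. For each n ≥ 1 let δ_{q,n} denote the unique ℚ-linear derivation of R with δ_{q,n}(x_k) = q(n,k) for all k ≥ 1, and for a finitely supported function ν : ℕ₊ → ℕ set δ_q^ν = ∘_{i≥1} δ_{q,i}^{ν_i} (these derivations commute, so the order is irrelevant). Suppose given maps C_n : R → B for n ≥ 0 such that: (1) C_0 is a ℚ-algebra homomorphism; (2) for all f, g ∈ R and all n ≥ 0, C_n(f·g) = Σ_{i+j=n} C_i(f)·C_j(g); (3) for every n ≥ 0, every d, and all f, g ∈ R that are w-homogeneous of degree d and every c ∈ ℚ, C_n(f+g) = C_n(f) + C_n(g) and C_n(c·f) = c·C_n(f); (4) C_n(x_k) = q(n,k)·C_n(x_1) for all n ≥ 1 and k ≥ 1. Then for every w-homogeneous polynomial f ∈ R and every n ≥ 0, C_n(f) = Σ_{ν ⊢ n} C_0(δ_q^ν(f))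 · ∏_{i≥1} C_i(x_1)^{ν_i}/(ν_i)!, where the sum runs over all finitely supported ν : ℕ₊ → ℕ with Σ_{i≥1} i·ν_i = n. -/

import Mathlib

open MvPolynomial Finset

noncomputable def deltaQ (q : ℕ → ℕ+ → ℚ) (n : ℕ) :
    Derivation ℚ (MvPolynomial ℕ+ ℚ) (MvPolynomial ℕ+ ℚ) :=
  mkDerivation ℚ fun k : ℕ+ => C (q n k)

noncomputable def deltaQPow (q : ℕ → ℕ+ → ℚ) {n : ℕ} (ν : n.Partition) :
    MvPolynomial ℕ+ ℚ →ₗ[ℚ] MvPolynomial ℕ+ ℚ :=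
  ((ν.parts.sort (· ≤ ·)).map fun i => (deltaQ q i).toLinearMap).prod

namespace KeyAux

variable (q : ℕ → ℕ+ → ℚ)

lemma deltaQ_X (i : ℕ) (k : ℕ+) : deltaQ q i (X k) = C (q i k) :=
  mkDerivation_X ℚ _ k

lemma deltaQ_C (i : ℕ) (c : ℚ) : deltaQ q i (C c) = 0 := by
  have : (C c : MvPolynomial ℕ+ ℚ) = algebraMap ℚ _ c := by simp [algebraMap_eq]
  rw [this, Derivation.map_algebraMap]

lemma deltaQ_comm_apply (i j : ℕ) (p : MvPolynomial ℕ+ ℚ) :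
    deltaQ q i (deltaQ q j p) = deltaQ q j (deltaQ q i p) := by
  have h : ⁅deltaQ q i, deltaQ q j⁆ = 0 := by
    apply derivation_ext
    intro k
    simp [Derivation.commutator_apply, deltaQ_X, deltaQ_C]
  have := Derivation.commutator_apply (D1 := deltaQ q i) (D2 := deltaQ q j) p
  rw [h] at this
  simp only [Derivation.zero_apply] at this
  exact sub_eq_zero.mp this.symm

lemma deltaQ_comm (i j : ℕ) :
    Commute (deltaQ q i).toLinearMap (deltaQ q j).toLinearMap := by
  refine LinearMap.ext fun p => ?_
  simpa [Module.End.mul_apply] using deltaQ_comm_apply q i j p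

noncomputable def Dm (s : Multiset ℕ) :
    MvPolynomial ℕ+ ℚ →ₗ[ℚ] MvPolynomial ℕ+ ℚ :=
  (s.map fun i => (deltaQ q i).toLinearMap).noncommProd (by
    intro x hx y hy _
    simp only [Set.mem_setOf_eq, Multiset.mem_map] at hx hy
    obtain ⟨i, _, rfl⟩ := hx
    obtain ⟨j, _, rfl⟩ := hy
    exact deltaQ_comm q i j)

@[simp] lemma Dm_zero_apply (f : MvPolynomial ℕ+ ℚ) : Dm q 0 f = f := by
  simp [Dm]

lemma Dm_cons (i : ℕ) (s : Multiset ℕ) (f : MvPolynomial ℕ+ ℚ) :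
    Dm q (i ::ₘ s) f = deltaQ q i (Dm q s f) := by
  rw [Dm]
  simp only [Multiset.map_cons, Multiset.noncommProd_cons]
  rfl

lemma deltaQPow_eq {n : ℕ} (ν : n.Partition) : deltaQPow q ν = Dm q ν.parts := by
  conv_rhs => rw [← Multiset.sort_eq ν.parts (· ≤ ·)]
  rw [Dm]
  simp only [Multiset.map_coe, Multiset.noncommProd_coe]
  rfl

lemma Dm_one (s : Multiset ℕ) (hs : s ≠ 0) : Dm q s 1 = 0 := by
  induction s using Multiset.induction_on with
  | empty => exact absurd rfl hs
  | cons i s IH =>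
    rw [Dm_cons]
    rcases eq_or_ne s 0 with rfl | h
    · simp
    · rw [IH h]; simp

lemma Dm_leibniz (k : ℕ+) (g : MvPolynomial ℕ+ ℚ) (s : Multiset ℕ) :
    Dm q s (X k * g) = X k * Dm q s g +
      (s.map fun j => q j k • Dm q (s.erase j) g).sum := by
  induction s using Multiset.induction_on with
  | empty => simp
  | cons i s IH =>
    rw [Dm_cons, IH, map_add, Derivation.leibniz, smul_eq_mul, smul_eq_mul, deltaQ_X,
      map_multiset_sum, Multiset.map_map]
    rw [Multiset.map_cons, Multiset.sum_cons, Multiset.erase_cons_head]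
    have h1 : (Multiset.map ((deltaQ q i) ∘ fun j => q j k • Dm q (s.erase j) g) s)
        = Multiset.map (fun j => q j k • Dm q ((i ::ₘ s).erase j) g) s := by
      apply Multiset.map_congr rfl
      intro j hj
      simp only [Function.comp_apply, Derivation.map_smul]
      congr 1
      rcases eq_or_ne j i with rfl | hne
      · rw [Multiset.erase_cons_head, ← Dm_cons, Multiset.cons_erase hj]
      · rw [Multiset.erase_cons_tail _ (Ne.symm hne), Dm_cons]
    rw [h1, ← Dm_cons]
    rw [mul_comm (Dm q s g) (C (q i k)), C_mul']
    ring

section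

variable {B : Type} [CommRing B] [Algebra ℚ B]

/-- `C_0` as a linear map. -/
def C0lin (Cc : ℕ → MvPolynomial ℕ+ ℚ → B)
    (hC0_add : ∀ f g, Cc 0 (f + g) = Cc 0 f + Cc 0 g)
    (hC0_smul : ∀ (c : ℚ) (f : MvPolynomial ℕ+ ℚ), Cc 0 (c • f) = c • Cc 0 f) :
    MvPolynomial ℕ+ ℚ →ₗ[ℚ] B where
  toFun := Cc 0
  map_add' := hC0_add
  map_smul' := hC0_smul

variable (Cc : ℕ → MvPolynomial ℕ+ ℚ → B)

/-- The product `Π_i (s.count i)!⁻¹ • C_i(x_1)^(s.count i)`. -/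
noncomputable def Pfun (n : ℕ) (s : Multiset ℕ) : B :=
  ∏ i ∈ range (n + 1), ((s.count i).factorial : ℚ)⁻¹ • Cc i (X 1) ^ s.count i

/-- The right-hand side of the Key Lemma. -/
noncomputable def Tfun (n : ℕ) (f : MvPolynomial ℕ+ ℚ) : B :=
  ∑ ν : n.Partition, Cc 0 (Dm q ν.parts f) * Pfun Cc n ν.parts

lemma Pfun_stable {m n : ℕ} (hmn : m ≤ n) (s : Multiset ℕ) (hs : ∀ i ∈ s, i ≤ m) :
    Pfun Cc n s = Pfun Cc m s := by
  refine (Finset.prod_subset (by simpa [Finset.range_subset_range] using Nat.succ_le_succ hmn)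
    fun i _ hi => ?_).symm
  have : i ∉ s := fun h => hi (by simpa using Nat.lt_succ_of_le (hs i h))
  simp [Multiset.count_eq_zero_of_notMem this]

lemma Pfun_cons {j n : ℕ} (hj : j ≤ n) (s : Multiset ℕ) :
    (((j ::ₘ s).count j : ℚ)) • Pfun Cc n (j ::ₘ s) = Cc j (X 1) * Pfun Cc n s := by
  have hjr : j ∈ range (n + 1) := by simpa using Nat.lt_succ_of_le hj
  rw [Pfun, Pfun, ← Finset.mul_prod_erase _ _ hjr, ← Finset.mul_prod_erase _ _ hjr]
  have hrest : ∀ i ∈ (range (n + 1)).erase j,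
      (((j ::ₘ s).count i).factorial : ℚ)⁻¹ • Cc i (X 1) ^ (j ::ₘ s).count i
      = ((s.count i).factorial : ℚ)⁻¹ • Cc i (X 1) ^ s.count i := by
    intro i hi
    rw [Multiset.count_cons_of_ne (Finset.ne_of_mem_erase hi) s]
  rw [Finset.prod_congr rfl hrest, Multiset.count_cons_self]
  set m := s.count j with hm
  have hcoef : ((m + 1 : ℕ) : ℚ) * ((m + 1).factorial : ℚ)⁻¹ = ((m.factorial : ℚ))⁻¹ := by
    rw [Nat.factorial_succ, Nat.cast_mul, mul_inv, ← mul_assoc,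
      mul_inv_cancel₀ (by positivity), one_mul]
  set a := Cc j (X 1) with ha
  set P := ∏ x ∈ (range (n + 1)).erase j,
    ((Multiset.count x s).factorial : ℚ)⁻¹ • Cc x (X 1) ^ Multiset.count x s with hP
  calc ((m + 1 : ℕ) : ℚ) • (((m + 1).factorial : ℚ)⁻¹ • a ^ (m + 1) * P)
      = ((((m + 1 : ℕ) : ℚ) * ((m + 1).factorial : ℚ)⁻¹) • a ^ (m + 1)) * P := by
        rw [smul_mul_assoc, smul_smul, smul_mul_assoc]
    _ = ((m.factorial : ℚ)⁻¹ • a ^ (m + 1)) * P := by rw [hcoef]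
    _ = (a * (m.factorial : ℚ)⁻¹ • a ^ m) * P := by rw [mul_smul_comm, ← pow_succ']
    _ = a * ((m.factorial : ℚ)⁻¹ • a ^ m * P) := by rw [mul_assoc]

lemma parts_le_sum {n : ℕ} (ν : n.Partition) {i : ℕ} (hi : i ∈ ν.parts) : i ≤ n := by
  have := Multiset.le_sum_of_mem hi
  rwa [ν.parts_sum] at this

lemma inner_sum (j n : ℕ) (hj1 : 1 ≤ j) (hjn : j ≤ n) (g : MvPolynomial ℕ+ ℚ) :
    ∑ ν : n.Partition,
      ((ν.parts.count j : ℚ)) • (Cc 0 (Dm q (ν.parts.erase j) g) * Pfun Cc n ν.parts)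
    = Cc j (X 1) *
        ∑ μ : (n - j).Partition, Cc 0 (Dm q μ.parts g) * Pfun Cc (n - j) μ.parts := by
  rw [Finset.mul_sum]
  rw [← Finset.sum_filter_of_ne (p := fun ν : n.Partition => j ∈ ν.parts)
    (fun ν _ hne => by
      by_contra hmem
      rw [Multiset.count_eq_zero_of_notMem hmem] at hne
      simp at hne)]
  refine Finset.sum_bij' (fun ν hν => ?_) (fun μ _ => ?_) ?_ ?_ ?_ ?_ ?_
  · -- forward map
    have hmem : j ∈ ν.parts := (Finset.mem_filter.mp hν).2
    refine ⟨ν.parts.erase j, fun hi => ν.parts_pos (Multiset.mem_of_mem_erase hi), ?_⟩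
    have h1 : (j ::ₘ ν.parts.erase j).sum = n := by rw [Multiset.cons_erase hmem, ν.parts_sum]
    rw [Multiset.sum_cons] at h1
    omega
  · -- inverse map
    refine ⟨j ::ₘ μ.parts, fun hi => ?_, ?_⟩
    · rcases Multiset.mem_cons.mp hi with rfl | h
      · omega
      · exact μ.parts_pos h
    · rw [Multiset.sum_cons, μ.parts_sum]; omega
  · intro ν hν; exact Finset.mem_univ _
  · intro μ hμ
    simp only [Finset.mem_filter, Finset.mem_univ, true_and]
    exact Multiset.mem_cons_self j μ.parts
  · intro ν hν
    exact Nat.Partition.ext (Multiset.cons_erase (Finset.mem_filter.mp hν).2)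
  · intro μ hμ
    exact Nat.Partition.ext (Multiset.erase_cons_head j μ.parts)
  · intro ν hν
    have hmem : j ∈ ν.parts := (Finset.mem_filter.mp hν).2
    have hparts : ν.parts = j ::ₘ ν.parts.erase j := (Multiset.cons_erase hmem).symm
    have hsum : (ν.parts.erase j).sum = n - j := by
      have h1 : (j ::ₘ ν.parts.erase j).sum = n := by rw [Multiset.cons_erase hmem, ν.parts_sum]
      rw [Multiset.sum_cons] at h1
      omega
    have hPs : Pfun Cc n ν.parts = Pfun Cc n (j ::ₘ ν.parts.erase j) := by rw [← hparts]
    have hcount : ν.parts.count j = (j ::ₘ ν.parts.erase j).count j := by rw [← hparts]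
    dsimp only
    rw [hPs, hcount, ← mul_smul_comm, Pfun_cons Cc hjn, Pfun_stable Cc (Nat.sub_le n j) _
      (fun i hi => by
        have := Multiset.le_sum_of_mem hi
        omega),
      mul_left_comm]

lemma T_rec
    (hC0_add : ∀ f g, Cc 0 (f + g) = Cc 0 f + Cc 0 g)
    (hC0_mul : ∀ f g, Cc 0 (f * g) = Cc 0 f * Cc 0 g)
    (hC0_smul : ∀ (c : ℚ) (f : MvPolynomial ℕ+ ℚ), Cc 0 (c • f) = c • Cc 0 f)
    (n : ℕ) (k : ℕ+) (g : MvPolynomial ℕ+ ℚ) :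
    Tfun q Cc n (X k * g) = Cc 0 (X k) * Tfun q Cc n g +
      ∑ j ∈ Icc 1 n, q j k • (Cc j (X 1) * Tfun q Cc (n - j) g) := by
  have hterm : ∀ ν : n.Partition,
      Cc 0 (Dm q ν.parts (X k * g)) * Pfun Cc n ν.parts
      = Cc 0 (X k) * (Cc 0 (Dm q ν.parts g) * Pfun Cc n ν.parts)
        + ∑ j ∈ Icc 1 n, q j k •
            (((ν.parts.count j : ℚ)) • (Cc 0 (Dm q (ν.parts.erase j) g) * Pfun Cc n ν.parts)) := by
    intro ν
    rw [Dm_leibniz, hC0_add, hC0_mul, add_mul, mul_assoc]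
    congr 1
    have hC0sum : Cc 0 ((ν.parts.map fun j => q j k • Dm q (ν.parts.erase j) g).sum)
        = (ν.parts.map fun j => q j k • Cc 0 (Dm q (ν.parts.erase j) g)).sum := by
      rw [show Cc 0 = ⇑(C0lin Cc hC0_add hC0_smul) from rfl, map_multiset_sum,
        Multiset.map_map]
      congr 1
      apply Multiset.map_congr rfl
      intro j hj
      simp only [Function.comp_apply, map_smul]
    rw [hC0sum, Finset.sum_multiset_map_count]
    rw [Finset.sum_subset (Finset.subset_iff.mpr (fun {x} hx => by
        rw [Multiset.mem_toFinset] at hx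
        exact Finset.mem_Icc.mpr ⟨ν.parts_pos hx, parts_le_sum ν hx⟩))
      (fun x _ hx => by
        rw [Multiset.mem_toFinset] at hx
        rw [Multiset.count_eq_zero_of_notMem hx, zero_smul])]
    rw [Finset.sum_mul]
    refine Finset.sum_congr rfl fun j hj => ?_
    rw [← Nat.cast_smul_eq_nsmul ℚ]
    simp only [Algebra.smul_def]
    ring
  rw [Tfun, Finset.sum_congr rfl (fun ν _ => hterm ν), Finset.sum_add_distrib,
    ← Finset.mul_sum]
  congr 1
  rw [Finset.sum_comm]
  refine Finset.sum_congr rfl fun j hj => ?_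
  rw [← Finset.smul_sum,
    inner_sum q Cc j n (Finset.mem_Icc.mp hj).1 (Finset.mem_Icc.mp hj).2 g, Tfun]

/-- The right-hand side as a linear map. -/
noncomputable def Tlin
    (hC0_add : ∀ f g, Cc 0 (f + g) = Cc 0 f + Cc 0 g)
    (hC0_smul : ∀ (c : ℚ) (f : MvPolynomial ℕ+ ℚ), Cc 0 (c • f) = c • Cc 0 f)
    (n : ℕ) : MvPolynomial ℕ+ ℚ →ₗ[ℚ] B :=
  ∑ ν : n.Partition, (LinearMap.mulRight ℚ (Pfun Cc n ν.parts)).comp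
    ((C0lin Cc hC0_add hC0_smul).comp (Dm q ν.parts))

lemma Tfun_eq_Tlin
    (hC0_add : ∀ f g, Cc 0 (f + g) = Cc 0 f + Cc 0 g)
    (hC0_smul : ∀ (c : ℚ) (f : MvPolynomial ℕ+ ℚ), Cc 0 (c • f) = c • Cc 0 f)
    (n : ℕ) (f : MvPolynomial ℕ+ ℚ) :
    Tfun q Cc n f = Tlin q Cc hC0_add hC0_smul n f := by
  rw [Tfun, Tlin, LinearMap.sum_apply]
  refine Finset.sum_congr rfl fun ν _ => ?_
  rfl

lemma Tfun_at_zero (f : MvPolynomial ℕ+ ℚ) : Tfun q Cc 0 f = Cc 0 f := by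
  rw [Tfun, Finset.univ_unique, Finset.sum_singleton]
  have h0 : (default : Nat.Partition 0).parts = 0 := Nat.Partition.partition_zero_parts _
  rw [h0]
  have : Pfun Cc 0 (0 : Multiset ℕ) = 1 := by
    simp [Pfun]
  rw [this, mul_one, Dm_zero_apply]

lemma Tfun_one
    (hC0_add : ∀ f g, Cc 0 (f + g) = Cc 0 f + Cc 0 g)
    (hC0_smul : ∀ (c : ℚ) (f : MvPolynomial ℕ+ ℚ), Cc 0 (c • f) = c • Cc 0 f)
    (n : ℕ) (hn : 1 ≤ n) : Tfun q Cc n 1 = 0 := by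
  rw [Tfun]
  refine Finset.sum_eq_zero fun ν _ => ?_
  have hne : ν.parts ≠ 0 := by
    intro h
    have := ν.parts_sum
    rw [h] at this
    simp at this
    omega
  rw [Dm_one q _ hne, show Cc 0 (0 : MvPolynomial ℕ+ ℚ) = 0 from
    map_zero (C0lin Cc hC0_add hC0_smul), zero_mul]

lemma Cc_one_eq_zero
    (hC0_one : Cc 0 1 = 1)
    (hCmul : ∀ (n : ℕ) (f g : MvPolynomial ℕ+ ℚ),
      Cc n (f * g) = ∑ p ∈ Finset.HasAntidiagonal.antidiagonal n, Cc p.1 f * Cc p.2 g) :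
    ∀ n, 1 ≤ n → Cc n 1 = 0 := by
  intro n
  induction n using Nat.strong_induction_on with
  | _ n IH =>
    intro hn
    obtain ⟨m, rfl⟩ : ∃ m, n = m + 1 := ⟨n - 1, by omega⟩
    have h := hCmul (m + 1) 1 1
    rw [mul_one, Finset.Nat.sum_antidiagonal_eq_sum_range_succ_mk,
      Finset.sum_range_succ', Finset.sum_range_succ] at h
    have hmid : ∑ i ∈ range m, Cc (i + 1) 1 * Cc (m + 1 - (i + 1)) 1 = 0 :=
      Finset.sum_eq_zero fun i hi => by
        rw [IH (i + 1) (by have := Finset.mem_range.mp hi; omega) (by omega), zero_mul]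
    rw [hmid, zero_add, Nat.sub_self, hC0_one, Nat.sub_zero, mul_one, one_mul] at h
    have h2 : Cc (m + 1) 1 + 0 = Cc (m + 1) 1 + Cc (m + 1) 1 := by
      rw [add_zero]; exact h
    exact (add_left_cancel h2).symm

lemma sum_antidiagonal_split (f : ℕ → ℕ → B) (n : ℕ) :
    ∑ p ∈ Finset.HasAntidiagonal.antidiagonal n, f p.1 p.2 = f 0 n + ∑ j ∈ Icc 1 n, f j (n - j) := by
  rw [Finset.Nat.sum_antidiagonal_eq_sum_range_succ_mk]
  have hins : range (n + 1) = insert 0 (Icc 1 n) := by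
    ext x
    simp only [Finset.mem_range, Finset.mem_insert, Finset.mem_Icc]
    omega
  rw [hins, Finset.sum_insert (by simp), Nat.sub_zero]

lemma Cc_monomial (w : ℕ+ → ℕ)
    (hC0_one : Cc 0 1 = 1)
    (hC0_add : ∀ f g, Cc 0 (f + g) = Cc 0 f + Cc 0 g)
    (hC0_smul : ∀ (c : ℚ) (f : MvPolynomial ℕ+ ℚ), Cc 0 (c • f) = c • Cc 0 f)
    (hC0_mul : ∀ f g, Cc 0 (f * g) = Cc 0 f * Cc 0 g)
    (hCmul : ∀ (n : ℕ) (f g : MvPolynomial ℕ+ ℚ),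
      Cc n (f * g) = ∑ p ∈ Finset.HasAntidiagonal.antidiagonal n, Cc p.1 f * Cc p.2 g)
    (hCX : ∀ n : ℕ, 1 ≤ n → ∀ k : ℕ+, Cc n (X k) = q n k • Cc n (X 1)) :
    ∀ (N : ℕ) (σ : ℕ+ →₀ ℕ), (σ.sum fun _ e => e) = N → ∀ n,
      Cc n (monomial σ 1) = Tfun q Cc n (monomial σ 1) := by
  intro N
  induction N using Nat.strong_induction_on with
  | _ N IH =>
    intro σ hσ n
    rcases Nat.eq_zero_or_pos N with rfl | hN
    · have hσ0 : σ = 0 := by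
        ext a
        by_contra ha
        have hmem : a ∈ σ.support := Finsupp.mem_support_iff.mpr fun h => ha (by simp [h])
        exact (Finsupp.mem_support_iff.mp hmem)
          (Finset.sum_eq_zero_iff.mp hσ a hmem)
      subst hσ0
      have h1 : (monomial (0 : ℕ+ →₀ ℕ) (1 : ℚ)) = 1 := by
        simp [monomial_zero']
      rw [h1]
      rcases Nat.eq_zero_or_pos n with rfl | hn
      · rw [Tfun_at_zero]
      · rw [Tfun_one q Cc hC0_add hC0_smul n hn, Cc_one_eq_zero Cc hC0_one hCmul n hn]
    · have hne : σ ≠ 0 := by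
        intro h
        subst h
        simp [Finsupp.sum_zero_index] at hσ
        omega
      obtain ⟨k, hk⟩ := Finsupp.support_nonempty_iff.mpr hne
      have hk1 : 1 ≤ σ k := Nat.one_le_iff_ne_zero.mpr (Finsupp.mem_support_iff.mp hk)
      set σ' := σ - Finsupp.single k 1 with hσ'def
      have hle : Finsupp.single k 1 ≤ σ := Finsupp.single_le_iff.mpr hk1
      have hadd : σ' + Finsupp.single k 1 = σ := tsub_add_cancel_of_le hle
      have hsum' : (σ'.sum fun _ e => e) = N - 1 := by
        have hsp : ((σ' + Finsupp.single k 1).sum fun _ e => e)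
            = (σ'.sum fun _ e => e) + ((Finsupp.single k 1).sum fun _ e => e) :=
          Finsupp.sum_add_index' (fun _ => rfl) (fun _ _ _ => rfl)
        rw [hadd, hσ] at hsp
        rw [Finsupp.sum_single_index rfl] at hsp
        omega
      have hmono : monomial σ (1 : ℚ) = X k * monomial σ' 1 := by
        rw [show (X k : MvPolynomial ℕ+ ℚ) = monomial (Finsupp.single k 1) 1 from rfl,
          monomial_mul, one_mul, add_comm, hadd]
      have IH' : ∀ m, Cc m (monomial σ' 1) = Tfun q Cc m (monomial σ' 1) :=
        IH (N - 1) (by omega) σ' hsum'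
      rw [hmono, hCmul n, sum_antidiagonal_split
        (fun a b => Cc a (X k) * Cc b (monomial σ' 1)) n,
        T_rec q Cc hC0_add hC0_mul hC0_smul n k (monomial σ' 1), IH' n]
      congr 1
      refine Finset.sum_congr rfl fun j hj => ?_
      rw [hCX j (Finset.mem_Icc.mp hj).1 k, IH' (n - j), smul_mul_assoc]

lemma key (w : ℕ+ → ℕ)
    (hC0_one : Cc 0 1 = 1)
    (hC0_add : ∀ f g, Cc 0 (f + g) = Cc 0 f + Cc 0 g)
    (hC0_mul : ∀ f g, Cc 0 (f * g) = Cc 0 f * Cc 0 g)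
    (hC0_smul : ∀ (c : ℚ) (f : MvPolynomial ℕ+ ℚ), Cc 0 (c • f) = c • Cc 0 f)
    (hCmul : ∀ (n : ℕ) (f g : MvPolynomial ℕ+ ℚ),
      Cc n (f * g) = ∑ p ∈ Finset.HasAntidiagonal.antidiagonal n, Cc p.1 f * Cc p.2 g)
    (hCadd : ∀ (n d : ℕ) (f g : MvPolynomial ℕ+ ℚ), f.IsWeightedHomogeneous w d →
      g.IsWeightedHomogeneous w d → Cc n (f + g) = Cc n f + Cc n g)
    (hCsmul : ∀ (n d : ℕ) (c : ℚ) (f : MvPolynomial ℕ+ ℚ), f.IsWeightedHomogeneous w d →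
      Cc n (c • f) = c • Cc n f)
    (hCX : ∀ n : ℕ, 1 ≤ n → ∀ k : ℕ+, Cc n (X k) = q n k • Cc n (X 1))
    (n d : ℕ) (f : MvPolynomial ℕ+ ℚ) (hf : f.IsWeightedHomogeneous w d) :
    Cc n f = Tfun q Cc n f := by
  have hCzero : Cc n 0 = 0 := by
    have h := hCsmul n 0 0 0 (isWeightedHomogeneous_zero ℚ w 0)
    rwa [smul_zero, zero_smul] at h
  have hwdeg : ∀ σ ∈ f.support, (Finsupp.weight w) σ = d := fun σ hσ =>
    hf (MvPolynomial.mem_support_iff.mp hσ)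
  have hCsum : ∀ s : Finset (ℕ+ →₀ ℕ), (∀ σ ∈ s, (Finsupp.weight w) σ = d) →
      ∀ φ : (ℕ+ →₀ ℕ) → ℚ,
        Cc n (∑ σ ∈ s, monomial σ (φ σ)) = ∑ σ ∈ s, Cc n (monomial σ (φ σ)) := by
    intro s
    induction s using Finset.induction_on with
    | empty => intro _ φ; simpa using hCzero
    | @insert a s hnot IHs =>
      intro hdeg φ
      have hm : (monomial a (φ a)).IsWeightedHomogeneous w d :=
        isWeightedHomogeneous_monomial w a (φ a) (hdeg a (Finset.mem_insert_self a s))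
      have hrest : (∑ σ ∈ s, monomial σ (φ σ)).IsWeightedHomogeneous w d := by
        rw [← mem_weightedHomogeneousSubmodule ℚ]
        exact Submodule.sum_mem _ fun σ hσ => (mem_weightedHomogeneousSubmodule ℚ w d _).mpr
          (isWeightedHomogeneous_monomial w σ (φ σ) (hdeg σ (Finset.mem_insert_of_mem hσ)))
      rw [Finset.sum_insert hnot, hCadd n d _ _ hm hrest,
        IHs (fun σ hσ => hdeg σ (Finset.mem_insert_of_mem hσ)) φ, Finset.sum_insert hnot]
  conv_lhs => rw [← support_sum_monomial_coeff f]
  conv_rhs => rw [← support_sum_monomial_coeff f]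
  rw [hCsum f.support hwdeg (fun σ => coeff σ f)]
  rw [Tfun_eq_Tlin q Cc hC0_add hC0_smul n, map_sum]
  refine Finset.sum_congr rfl fun σ hσ => ?_
  have hm1 : (monomial σ (1 : ℚ)).IsWeightedHomogeneous w d :=
    isWeightedHomogeneous_monomial w σ 1 (hwdeg σ hσ)
  have hcm : monomial σ (coeff σ f) = (coeff σ f) • monomial σ (1 : ℚ) := by
    rw [smul_monomial, smul_eq_mul, mul_one]
  rw [hcm, hCsmul n d _ _ hm1,
    Cc_monomial q Cc w hC0_one hC0_add hC0_smul hC0_mul hCmul hCX (σ.sum fun _ e => e) σ rfl n,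
    Tfun_eq_Tlin q Cc hC0_add hC0_smul n, ← map_smul]

end

end KeyAux

theorem stmt0 (w : ℕ+ → ℕ) (B : Type) [CommRing B] [Algebra ℚ B]
    (q : ℕ → ℕ+ → ℚ)
    (hqpos : ∀ n : ℕ, 1 ≤ n → ∀ k : ℕ+, 0 < q n k)
    (hq1 : ∀ n : ℕ, 1 ≤ n → q n 1 = 1)
    (Cc : ℕ → MvPolynomial ℕ+ ℚ → B)
    (hC0_one : Cc 0 1 = 1)
    (hC0_add : ∀ f g, Cc 0 (f + g) = Cc 0 f + Cc 0 g)
    (hC0_mul : ∀ f g, Cc 0 (f * g) = Cc 0 f * Cc 0 g)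
    (hC0_smul : ∀ (c : ℚ) (f : MvPolynomial ℕ+ ℚ), Cc 0 (c • f) = c • Cc 0 f)
    (hCmul : ∀ (n : ℕ) (f g : MvPolynomial ℕ+ ℚ),
      Cc n (f * g) = ∑ p ∈ Finset.HasAntidiagonal.antidiagonal n, Cc p.1 f * Cc p.2 g)
    (hCadd : ∀ (n d : ℕ) (f g : MvPolynomial ℕ+ ℚ), f.IsWeightedHomogeneous w d →
      g.IsWeightedHomogeneous w d → Cc n (f + g) = Cc n f + Cc n g)
    (hCsmul : ∀ (n d : ℕ) (c : ℚ) (f : MvPolynomial ℕ+ ℚ), f.IsWeightedHomogeneous w d →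
      Cc n (c • f) = c • Cc n f)
    (hCX : ∀ n : ℕ, 1 ≤ n → ∀ k : ℕ+, Cc n (X k) = q n k • Cc n (X 1))
    (n d : ℕ) (f : MvPolynomial ℕ+ ℚ) (hf : f.IsWeightedHomogeneous w d) :
    Cc n f = ∑ ν : n.Partition,
      Cc 0 (deltaQPow q ν f) *
        ∏ i ∈ Finset.range (n + 1),
          ((ν.parts.count i).factorial : ℚ)⁻¹ • Cc i (X 1) ^ ν.parts.count i := by
  rw [KeyAux.key q Cc w hC0_one hC0_add hC0_mul hC0_smul hCmul hCadd hCsmul hCX n d f hf,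
    KeyAux.Tfun]
  refine Finset.sum_congr rfl fun ν _ => ?_
  rw [KeyAux.deltaQPow_eq]
  rfl
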